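/- arXiv:2509.05191 — 2 statements merged into one kernel-verified Lean document; each statement's English description precedes it below -/
import Mathlib

section
/- Let f : ℝ × ℝ^n → ℝ^n, g : ℝ × ℝ^n → ℝ^{n×m} and ψ : ℝ × ℝ^n → ℝ be infinitely differentiable. Let ρ ≥ 1 and suppose L_g L_f^i ψ(t,x) = 0 (as a row vector in ℝ^{1×m}) for all (t,x) ∈ ℝ × ℝ^n and all 0 ≤ i ≤ ρ − 2. Let u : I → ℝ^m be continuous on an interval I and let x : I → ℝ^n be differentiable with ẋ(t) = f(t,x(t)) + g(t,x(t))u(t) for all t ∈ I. Then the map t ↦ ψ(t,x(t)) is (ρ−1)-times continuously differentiable on I, its i-th derivative equals L_f^i ψ(t,x(t)) for every 0 ≤ i ≤ ρ − 1, and at every t ∈ I its ρ-th derivative exists and equals L_f^ρ ψ(t,x(t)) + L_g L_f^{ρ−1} ψ(t,x(t))·u(t). -/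
noncomputable section

open Real MeasureTheory Finset

/-- One-step Lie derivative of a scalar function `ψ` along the time-varying vector field `f`:
`L_f ψ (t,x) = (∂ₓ ψ)(t,x) · f(t,x) + (∂ₜ ψ)(t,x)`, expressed as the total (Fréchet)
derivative of `ψ` in the direction `(1, f(t,x))`. -/
def lieF {n : ℕ} (f : ℝ × (Fin n → ℝ) → Fin n → ℝ) (ψ : ℝ × (Fin n → ℝ) → ℝ) :
    ℝ × (Fin n → ℝ) → ℝ :=
  fun p => fderiv ℝ ψ p (1, f p)

/-- Iterated Lie derivative `L_f^j ψ`, with `L_f^0 ψ = ψ`. -/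
def lieFIter {n : ℕ} (f : ℝ × (Fin n → ℝ) → Fin n → ℝ) (ψ : ℝ × (Fin n → ℝ) → ℝ)
    (j : ℕ) : ℝ × (Fin n → ℝ) → ℝ :=
  (lieF f)^[j] ψ

/-- Mixed Lie derivative `L_g ψ (t,x) = (∂ₓ ψ)(t,x) · g(t,x) ∈ ℝ^{1×m}` as a row vector;
the `i`-th component is the derivative of `ψ` in the (space) direction of the `i`-th
column of `g`. -/
def lieG {n m : ℕ} (g : ℝ × (Fin n → ℝ) → Fin n → Fin m → ℝ)
    (ψ : ℝ × (Fin n → ℝ) → ℝ) : ℝ × (Fin n → ℝ) → Fin m → ℝ :=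
  fun p i => fderiv ℝ ψ p (0, fun a => g p a i)

/-- `lieF` preserves smoothness. -/
private lemma lieF_contDiff {n : ℕ} (f : ℝ × (Fin n → ℝ) → Fin n → ℝ)
    (χ : ℝ × (Fin n → ℝ) → ℝ)
    (hf : ContDiff ℝ (⊤ : ℕ∞) f) (hχ : ContDiff ℝ (⊤ : ℕ∞) χ) :
    ContDiff ℝ (⊤ : ℕ∞) (lieF f χ) := by
  have h1 : ContDiff ℝ (⊤ : ℕ∞) (fderiv ℝ χ) := hχ.fderiv_right (by exact_mod_cast le_top)
  exact h1.clm_apply (contDiff_const.prodMk hf)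

/-- Chain rule along the trajectory. -/
private lemma key_hasDerivAt {n m : ℕ} (f : ℝ × (Fin n → ℝ) → Fin n → ℝ)
    (g : ℝ × (Fin n → ℝ) → Fin n → Fin m → ℝ)
    (χ : ℝ × (Fin n → ℝ) → ℝ) (hχ : ContDiff ℝ (⊤ : ℕ∞) χ)
    (u : ℝ → Fin m → ℝ) (x : ℝ → Fin n → ℝ) (t : ℝ)
    (hx : HasDerivAt x (fun a => f (t, x t) a + ∑ i, g (t, x t) a i * u t i) t) :
    HasDerivAt (fun s => χ (s, x s))
      (lieF f χ (t, x t) + ∑ i, lieG g χ (t, x t) i * u t i) t := by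
  have hc : HasDerivAt (fun s => (s, x s))
      ((1 : ℝ), fun a => f (t, x t) a + ∑ i, g (t, x t) a i * u t i) t :=
    (hasDerivAt_id t).prodMk hx
  have hfd : HasFDerivAt χ (fderiv ℝ χ (t, x t)) (t, x t) :=
    (hχ.differentiable (by simp) (t, x t)).hasFDerivAt
  have h := hfd.comp_hasDerivAt t hc
  refine h.congr_deriv ?_
  symm
  have hv : ((1 : ℝ), fun a => f (t, x t) a + ∑ i, g (t, x t) a i * u t i)
      = ((1 : ℝ), f (t, x t)) + ∑ i, u t i • ((0 : ℝ), fun a => g (t, x t) a i) := by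
    refine Prod.ext ?_ ?_
    · simp [Prod.fst_sum]
    · funext a
      simp [Prod.snd_sum, Finset.sum_apply, mul_comm]
  rw [hv, map_add, map_sum]
  congr 1
  refine Finset.sum_congr rfl fun i _ => ?_
  rw [ContinuousLinearMap.map_smul]
  simp [lieG, mul_comm]

/-- **Derivatives of `ψ` along a trajectory of `ẋ = f + g·u`.**
If `L_g L_f^i ψ = 0` for `0 ≤ i ≤ ρ-2`, then `t ↦ ψ(t,x(t))` is `(ρ-1)`-times continuously
differentiable on `I`, its `i`-th derivative is `L_f^i ψ(t,x(t))` for `0 ≤ i ≤ ρ-1`, and its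
`ρ`-th derivative exists and equals `L_f^ρ ψ + (L_g L_f^{ρ-1} ψ)·u`. -/
theorem lie_derivatives_along_trajectory
    {n m : ℕ} (f : ℝ × (Fin n → ℝ) → Fin n → ℝ)
    (g : ℝ × (Fin n → ℝ) → Fin n → Fin m → ℝ)
    (ψ : ℝ × (Fin n → ℝ) → ℝ)
    (hf : ContDiff ℝ (⊤ : ℕ∞) f) (hg : ContDiff ℝ (⊤ : ℕ∞) g)
    (hψ : ContDiff ℝ (⊤ : ℕ∞) ψ)
    (ρ : ℕ) (hρ : 1 ≤ ρ)
    (hzero : ∀ i : ℕ, i + 2 ≤ ρ → ∀ p : ℝ × (Fin n → ℝ),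
      lieG g (lieFIter f ψ i) p = 0)
    (I : Set ℝ) (hI : IsOpen I) (hI' : I.OrdConnected)
    (u : ℝ → Fin m → ℝ) (hu : ContinuousOn u I)
    (x : ℝ → Fin n → ℝ)
    (hx : ∀ t ∈ I, HasDerivAt x
      (fun a => f (t, x t) a + ∑ i, g (t, x t) a i * u t i) t) :
    ContDiffOn ℝ ((ρ - 1 : ℕ) : ℕ∞) (fun s => ψ (s, x s)) I ∧
    (∀ i ≤ ρ - 1, ∀ t ∈ I,
      iteratedDerivWithin i (fun s => ψ (s, x s)) I t = lieFIter f ψ i (t, x t)) ∧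
    (∀ t ∈ I, HasDerivAt (iteratedDerivWithin (ρ - 1) (fun s => ψ (s, x s)) I)
      (lieFIter f ψ ρ (t, x t) +
        ∑ i, lieG g (lieFIter f ψ (ρ - 1)) (t, x t) i * u t i) t) := by
  have hsucc : ∀ j, lieFIter f ψ (j + 1) = lieF f (lieFIter f ψ j) := fun j => by
    simp [lieFIter, Function.iterate_succ_apply']
  have hsmooth : ∀ j, ContDiff ℝ (⊤ : ℕ∞) (lieFIter f ψ j) := by
    intro j; induction j with
    | zero => exact hψ
    | succ j ih => rw [hsucc j]; exact lieF_contDiff f _ hf ih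
  have hxC : ContinuousOn x I := fun t ht => ((hx t ht).continuousAt).continuousWithinAt
  have hφcont : ∀ j, ContinuousOn (fun t => lieFIter f ψ j (t, x t)) I := fun j =>
    ((hsmooth j).continuous).comp_continuousOn (continuousOn_id.prodMk hxC)
  have hstep : ∀ j, j + 2 ≤ ρ → ∀ t ∈ I,
      HasDerivAt (fun s => lieFIter f ψ j (s, x s)) (lieFIter f ψ (j + 1) (t, x t)) t := by
    intro j hj t ht
    have h := key_hasDerivAt f g (lieFIter f ψ j) (hsmooth j) u x t (hx t ht)
    have hz : (∑ i, lieG g (lieFIter f ψ j) (t, x t) i * u t i) = 0 := by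
      have h0 := hzero j hj (t, x t)
      simp [h0]
    rw [hz, add_zero] at h
    rw [hsucc j]
    exact h
  have hCD : ∀ k j, j + k + 1 ≤ ρ →
      ContDiffOn ℝ (k : ℕ∞) (fun s => lieFIter f ψ j (s, x s)) I := by
    intro k
    induction k with
    | zero =>
      intro j _
      simpa [contDiffOn_zero] using hφcont j
    | succ k ih =>
      intro j hj
      rw [show (((k + 1 : ℕ) : ℕ∞) : WithTop ℕ∞) = ((k : ℕ∞) : WithTop ℕ∞) + 1 by
        push_cast; rfl]
      refine (contDiffOn_succ_iff_deriv_of_isOpen hI).2 ⟨?_, ?_, ?_⟩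
      · exact fun t ht => (hstep j (by omega) t ht).differentiableAt.differentiableWithinAt
      · simp
      · exact (ih (j + 1) (by omega)).congr fun t ht => (hstep j (by omega) t ht).deriv
  have hiter : ∀ i, i + 1 ≤ ρ → ∀ t ∈ I,
      iteratedDerivWithin i (fun s => ψ (s, x s)) I t = lieFIter f ψ i (t, x t) := by
    intro i
    induction i with
    | zero => intro _ t ht; simp [lieFIter]
    | succ i ih =>
      intro hi t ht
      rw [iteratedDerivWithin_succ, derivWithin_of_isOpen hI ht]
      have heq : deriv (iteratedDerivWithin i (fun s => ψ (s, x s)) I) t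
          = deriv (fun s => lieFIter f ψ i (s, x s)) t := by
        apply Filter.EventuallyEq.deriv_eq
        filter_upwards [hI.mem_nhds ht] with s hs using ih (by omega) s hs
      rw [heq]
      exact (hstep i (by omega) t ht).deriv
  refine ⟨?_, ?_, ?_⟩
  · exact hCD (ρ - 1) 0 (by omega)
  · intro i hi t ht
    exact hiter i (by omega) t ht
  · intro t ht
    have h := key_hasDerivAt f g (lieFIter f ψ (ρ - 1)) (hsmooth (ρ - 1)) u x t (hx t ht)
    have hr : lieFIter f ψ ρ = lieF f (lieFIter f ψ (ρ - 1)) := by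
      conv_lhs => rw [show ρ = (ρ - 1) + 1 by omega]
      exact hsucc (ρ - 1)
    rw [hr]
    refine h.congr_of_eventuallyEq ?_
    filter_upwards [hI.mem_nhds ht] with s hs using hiter (ρ - 1) (by omega) s hs
end
end

section
/- Let f : ℝ × ℝ^n → ℝ^n, g : ℝ × ℝ^n → ℝ^{n×m} and φ : ℝ × ℝ^n → ℝ^r be infinitely differentiable with r = m. Assume φ has relative degree ρ ∈ ℕ^r with respect to (f,g), and that the r×m matrix Ω_g(t,x), whose k-th row is L_g L_f^{ρ_k−1} φ_k(t,x), is invertible for every (t,x) ∈ ℝ × ℝ^n. Fix t0 < T, x0 ∈ ℝ^n, and real initial values z_k^{(i)}(t0) for k ∈ {1,…,r} and 0 ≤ i ≤ ρ_k − 1 such that φ_k(t0,x0) + z_k(t0)²/2 = 0 and, for every 1 ≤ i ≤ ρ_k − 1, L_f^i φ_k(t0,x0) + z_k(t0)·z_k^{(i)}(t0) + (1/2)·Σ_{j=1}^{i−1} binom(i,j)·z_k^{(i−j)}(t0)·z_k^{(j)}(t0) = 0. Let w : [t0,T] → ℝ^r be Lebesgue integrable, and define z_k^{(i)} : [t0,T]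 → ℝ by repeated integration: z_k^{(ρ_k−1)}(t) = z_k^{(ρ_k−1)}(t0) + ∫_{t0}^t w_k(s) ds, and z_k^{(i−1)}(t) = z_k^{(i−1)}(t0) + ∫_{t0}^t z_k^{(i)}(s) ds for 1 ≤ i ≤ ρ_k − 1. Define u : [t0,T] → ℝ^m by u(s) = −Ω_g(s,x(s))^{-1}·( Ω_f(s) + D(z(s))·w(s) ), where D(z(s)) = diag(z_1(s),…,z_r(s)) with z_k(s) := z_k^{(0)}(s), and Ω_f(s) ∈ ℝ^r has k-th entry L_f^{ρ_k} φ_k(s,x(s)) + (1/2)·Σ_{j=1}^{ρ_k−1} binom(ρ_k,j)·z_k^{(ρ_k−j)}(s)·z_k^{(j)}(s). Suppose x : [t0,T] → ℝ^n is continuous, u is integrable on [t0,T], and x(t) = x0 + ∫_{t0}^t ( f(s,x(s)) + g(s,x(s))·u(s) ) ds for all t ∈ [t0,T]. Then φ_k(t,x(t)) ≤ 0 for every t ∈ [t0,T] and every k ∈ {1,…,r}. -/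
noncomputable section

open Real MeasureTheory Finset

section AuxLemmas
open intervalIntegral

lemma integral_congr_Icc {E : Type*} [NormedAddCommGroup E] [NormedSpace ℝ E]
    {a b t : ℝ} (ht : t ∈ Set.Icc a b) {F G : ℝ → E}
    (h : ∀ s ∈ Set.Icc a b, F s = G s) :
    ∫ s in a..t, F s = ∫ s in a..t, G s := by
  apply intervalIntegral.integral_congr
  intro s hs
  rw [Set.uIcc_of_le ht.1] at hs
  exact h s ⟨hs.1, hs.2.trans ht.2⟩

lemma chainCR {E : Type*} [NormedAddCommGroup E] [NormedSpace ℝ E] [FiniteDimensional ℝ E]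
    {ψ : E → ℝ} (hψ : ContDiff ℝ 1 ψ)
    {a b : ℝ} {V : ℝ → E} (hV : IntegrableOn V (Set.Icc a b))
    {γ : ℝ → E} (hγ : ∀ t ∈ Set.Icc a b, γ t = γ a + ∫ s in a..t, V s) :
    ∀ t ∈ Set.Icc a b, ψ (γ t) = ψ (γ a) + ∫ s in a..t, (fderiv ℝ ψ (γ s)) (V s) := by
  intro t ht
  have hat : a ≤ t := ht.1
  have htb : t ≤ b := ht.2
  have hab : a ≤ b := le_trans hat htb
  set I := Set.Icc a b with hI
  -- replace V by its indicator
  set W : ℝ → E := Set.indicator I V with hWdef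
  have hW : Integrable W := (integrable_indicator_iff measurableSet_Icc).2 hV
  have hWV : ∀ s ∈ I, W s = V s := fun s hs => Set.indicator_of_mem hs V
  have hintW : ∀ τ ∈ I, (∫ s in a..τ, W s) = ∫ s in a..τ, V s :=
    fun τ hτ => integral_congr_Icc hτ hWV
  have hγ' : ∀ τ ∈ I, γ τ = γ a + ∫ s in a..τ, W s := by
    intro τ hτ; rw [hintW τ hτ]; exact hγ τ hτ
  -- continuity of γ on I
  have hγc : ContinuousOn γ I := by
    apply ContinuousOn.congr (f := fun τ => γ a + ∫ s in a..τ, W s)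
    · exact (continuous_const.add (hW.continuous_primitive a)).continuousOn
    · intro τ hτ; exact hγ' τ hτ
  -- compact neighborhood of the curve
  have hKc : IsCompact (γ '' I) := isCompact_Icc.image_of_continuousOn hγc
  set K' : Set E := Metric.cthickening 1 (γ '' I) with hK'def
  have hK'c : IsCompact K' := hKc.cthickening
  have hDc : Continuous (fderiv ℝ ψ) := hψ.continuous_fderiv one_ne_zero
  obtain ⟨M0, hM0⟩ := hK'c.exists_bound_of_continuousOn hDc.continuousOn
  set M : ℝ := max M0 0 with hMdef
  have hMnn : 0 ≤ M := le_max_right _ _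
  have hM : ∀ y ∈ K', ‖fderiv ℝ ψ y‖ ≤ M := fun y hy => (hM0 y hy).trans (le_max_left _ _)
  -- approximating sequence
  have h0 : ∀ n : ℕ, (0:ℝ) < 1/(n+1) := by intro n; positivity
  choose g hg1 hg2 hg3 hg4 using fun n : ℕ => hW.exists_hasCompactSupport_integral_sub_le (h0 n)
  set γn : ℕ → ℝ → E := fun n τ => γ a + ∫ s in a..τ, g n s with hγndef
  have hγnc : ∀ n, Continuous (γn n) :=
    fun n => continuous_const.add ((hg4 n).continuous_primitive a)
  have hsubL1 : ∀ n, Integrable (fun s => W s - g n s) := fun n => hW.sub (hg4 n)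
  have hdist : ∀ n, ∀ τ ∈ I, ‖γn n τ - γ τ‖ ≤ 1/(n+1) := by
    intro n τ hτ
    rw [hγ' τ hτ]
    have : γn n τ - (γ a + ∫ s in a..τ, W s) = ∫ s in a..τ, (g n s - W s) := by
      simp only [hγndef]
      rw [intervalIntegral.integral_sub ((hg4 n).intervalIntegrable)
        (hW.intervalIntegrable)]
      abel
    rw [this]
    calc ‖∫ s in a..τ, (g n s - W s)‖
        ≤ ∫ s in a..τ, ‖g n s - W s‖ :=
          intervalIntegral.norm_integral_le_integral_norm hτ.1
      _ = ∫ s in a..τ, ‖W s - g n s‖ := by simp_rw [norm_sub_rev]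
      _ ≤ ∫ s, ‖W s - g n s‖ := by
          rw [intervalIntegral.integral_of_le hτ.1]
          exact setIntegral_le_integral (hsubL1 n).norm
            (Filter.Eventually.of_forall fun s => norm_nonneg _)
      _ ≤ 1/(n+1) := hg2 n
  have hmemK' : ∀ n, ∀ τ ∈ I, γn n τ ∈ K' := by
    intro n τ hτ
    apply Metric.mem_cthickening_of_dist_le (γn n τ) (γ τ) 1 (γ '' I) ⟨τ, hτ, rfl⟩

    rw [dist_eq_norm]
    exact (hdist n τ hτ).trans (by
      rw [div_le_one (by positivity)]; linarith [Nat.cast_nonneg (α := ℝ) n])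
  -- FTC for the approximations
  have hFTC : ∀ n, ψ (γn n t) = ψ (γ a) + ∫ s in a..t, (fderiv ℝ ψ (γn n s)) (g n s) := by
    intro n
    have hderiv : ∀ τ, HasDerivAt (γn n) (g n τ) τ := by
      intro τ
      apply HasDerivAt.const_add
      exact intervalIntegral.integral_hasDerivAt_right
        ((hg4 n).intervalIntegrable)
        ((hg3 n).stronglyMeasurable.stronglyMeasurableAtFilter)
        (hg3 n).continuousAt
    have hcomp : ∀ τ, HasDerivAt (fun τ => ψ (γn n τ))
        ((fderiv ℝ ψ (γn n τ)) (g n τ)) τ := by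
      intro τ
      exact ((hψ.differentiable one_ne_zero _).hasFDerivAt.comp_hasDerivAt τ (hderiv τ))
    have hcont : Continuous fun τ => (fderiv ℝ ψ (γn n τ)) (g n τ) :=
      (hDc.comp (hγnc n)).clm_apply (hg3 n)
    have := intervalIntegral.integral_eq_sub_of_hasDerivAt
      (f := fun τ => ψ (γn n τ)) (fun τ _ => hcomp τ)
      (hcont.intervalIntegrable a t)
    have hγna : γn n a = γ a := by simp [hγndef]
    rw [this, hγna]
    ring
  -- limit of the left side
  have hten : Filter.Tendsto (fun n : ℕ => 1/((n:ℝ)+1)) Filter.atTop (nhds 0) :=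
    tendsto_one_div_add_atTop_nhds_zero_nat
  have hL1 : Filter.Tendsto (fun n => ψ (γn n t)) Filter.atTop (nhds (ψ (γ t))) := by
    apply ((hψ.continuous).tendsto (γ t)).comp
    rw [tendsto_iff_dist_tendsto_zero]
    apply squeeze_zero (fun n => dist_nonneg)
      (fun n => by rw [dist_eq_norm]; exact hdist n t ht) hten
  -- measurability of the paired applications
  have hAESM : ∀ (n : ℕ) (h : ℝ → E), AEStronglyMeasurable h volume →
      AEStronglyMeasurable (fun s => (fderiv ℝ ψ (γn n s)) (h s)) volume := by
    intro n h hh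
    exact isBoundedBilinearMap_apply.continuous.comp_aestronglyMeasurable
      (((hDc.comp (hγnc n)).aestronglyMeasurable).prodMk hh)
  have hIoc : Set.Ioc a t ⊆ I := fun s hs => ⟨le_of_lt hs.1, hs.2.trans htb⟩
  -- pointwise domination on Ioc a t
  have hbound : ∀ (n : ℕ) (h : ℝ → E), ∀ s ∈ Set.Ioc a t,
      ‖(fderiv ℝ ψ (γn n s)) (h s)‖ ≤ M * ‖h s‖ := by
    intro n h s hs
    calc ‖(fderiv ℝ ψ (γn n s)) (h s)‖ ≤ ‖fderiv ℝ ψ (γn n s)‖ * ‖h s‖ :=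
          ContinuousLinearMap.le_opNorm _ _
      _ ≤ M * ‖h s‖ := by
          apply mul_le_mul_of_nonneg_right (hM _ (hmemK' n s (hIoc hs))) (norm_nonneg _)
  -- interval integrability of the two pieces
  have hBint : ∀ n, IntervalIntegrable (fun s => (fderiv ℝ ψ (γn n s)) (W s)) volume a t := by
    intro n
    rw [intervalIntegrable_iff_integrableOn_Ioc_of_le hat]
    apply Integrable.mono' ((hW.norm.const_mul M).restrict (s := Set.Ioc a t))
      ((hAESM n W hW.aestronglyMeasurable).restrict)
    exact (ae_restrict_iff' measurableSet_Ioc).2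
      (Filter.Eventually.of_forall fun s hs => hbound n W s hs)
  have hAint : ∀ n, IntervalIntegrable
      (fun s => (fderiv ℝ ψ (γn n s)) (g n s - W s)) volume a t := by
    intro n
    rw [intervalIntegrable_iff_integrableOn_Ioc_of_le hat]
    apply Integrable.mono' ((((hg4 n).sub hW).norm.const_mul M).restrict (s := Set.Ioc a t))
      ((hAESM n _ ((hg4 n).sub hW).aestronglyMeasurable).restrict)
    exact (ae_restrict_iff' measurableSet_Ioc).2
      (Filter.Eventually.of_forall fun s hs => hbound n _ s hs)
  -- splitting the approximating integrals
  have hsplit : ∀ n, (∫ s in a..t, (fderiv ℝ ψ (γn n s)) (g n s)) =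
      (∫ s in a..t, (fderiv ℝ ψ (γn n s)) (g n s - W s)) +
      (∫ s in a..t, (fderiv ℝ ψ (γn n s)) (W s)) := by
    intro n
    rw [← intervalIntegral.integral_add (hAint n) (hBint n)]
    apply intervalIntegral.integral_congr
    intro s _
    simp [map_sub]
  -- the error part tends to zero
  have hL2b : Filter.Tendsto (fun n => ∫ s in a..t, (fderiv ℝ ψ (γn n s)) (g n s - W s))
      Filter.atTop (nhds 0) := by
    apply squeeze_zero_norm (a := fun n : ℕ => M * (1/(n+1)))
    · intro n
      have h1 : ‖∫ s in a..t, (fderiv ℝ ψ (γn n s)) (g n s - W s)‖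
          ≤ ∫ s in a..t, ‖(fderiv ℝ ψ (γn n s)) (g n s - W s)‖ :=
        intervalIntegral.norm_integral_le_integral_norm hat
      have h2 : (∫ s in a..t, ‖(fderiv ℝ ψ (γn n s)) (g n s - W s)‖)
          ≤ ∫ s in Set.Ioc a t, M * ‖g n s - W s‖ := by
        rw [intervalIntegral.integral_of_le hat]
        apply integral_mono_of_nonneg
          (Filter.Eventually.of_forall fun s => norm_nonneg _)
          ((((hg4 n).sub hW).norm.const_mul M).restrict (s := Set.Ioc a t))
        exact (ae_restrict_iff' measurableSet_Ioc).2
          (Filter.Eventually.of_forall fun s hs => hbound n (g n - W) s hs)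
      have h3 : (∫ s in Set.Ioc a t, M * ‖g n s - W s‖) ≤ M * (1/(n+1)) := by
        rw [MeasureTheory.integral_const_mul]
        apply mul_le_mul_of_nonneg_left _ hMnn
        calc (∫ s in Set.Ioc a t, ‖g n s - W s‖) ≤ ∫ s, ‖g n s - W s‖ :=
              setIntegral_le_integral ((hg4 n).sub hW).norm
                (Filter.Eventually.of_forall fun s => norm_nonneg _)
          _ = ∫ s, ‖W s - g n s‖ := by simp_rw [norm_sub_rev]
          _ ≤ 1/(n+1) := hg2 n
      exact h1.trans (h2.trans h3)
    · have := hten.const_mul M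
      simpa using this
  -- the main part converges by dominated convergence
  have hL2a : Filter.Tendsto (fun n => ∫ s in a..t, (fderiv ℝ ψ (γn n s)) (W s))
      Filter.atTop (nhds (∫ s in a..t, (fderiv ℝ ψ (γ s)) (W s))) := by
    simp_rw [intervalIntegral.integral_of_le hat]
    apply tendsto_integral_of_dominated_convergence (fun s => M * ‖W s‖)
      (fun n => (hAESM n W hW.aestronglyMeasurable).restrict)
      ((hW.norm.const_mul M).restrict (s := Set.Ioc a t))
    · intro n
      exact (ae_restrict_iff' measurableSet_Ioc).2
        (Filter.Eventually.of_forall fun s hs => hbound n W s hs)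
    · apply (ae_restrict_iff' measurableSet_Ioc).2
      apply Filter.Eventually.of_forall
      intro s hs
      have hγns : Filter.Tendsto (fun n => γn n s) Filter.atTop (nhds (γ s)) := by
        rw [tendsto_iff_dist_tendsto_zero]
        apply squeeze_zero (fun n => dist_nonneg)
          (fun n => by rw [dist_eq_norm]; exact hdist n s (hIoc hs)) hten
      exact (((hDc.clm_apply continuous_const).tendsto (γ s)).comp hγns)
  -- put everything together
  have hseq : Filter.Tendsto (fun n => ψ (γn n t)) Filter.atTop
      (nhds (ψ (γ a) + (0 + ∫ s in a..t, (fderiv ℝ ψ (γ s)) (W s)))) := by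
    have : (fun n => ψ (γn n t)) = fun n => ψ (γ a) +
        ((∫ s in a..t, (fderiv ℝ ψ (γn n s)) (g n s - W s)) +
         (∫ s in a..t, (fderiv ℝ ψ (γn n s)) (W s))) := by
      funext n; rw [hFTC n, hsplit n]
    rw [this]
    exact tendsto_const_nhds.add (hL2b.add hL2a)
  have := tendsto_nhds_unique hL1 hseq
  rw [this, zero_add]
  congr 1
  apply integral_congr_Icc ht
  intro s hs
  rw [hWV s hs]

lemma intervalIntegral_pair {E F : Type*} [NormedAddCommGroup E] [NormedSpace ℝ E]
    [NormedAddCommGroup F] [NormedSpace ℝ F] [CompleteSpace E] [CompleteSpace F]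
    {a b : ℝ} {f : ℝ → E} {g : ℝ → F}
    (hf : IntervalIntegrable f volume a b) (hg : IntervalIntegrable g volume a b) :
    (∫ s in a..b, (f s, g s)) = (∫ s in a..b, f s, ∫ s in a..b, g s) := by
  simp only [intervalIntegral]
  rw [integral_pair hf.1 hg.1, integral_pair hf.2 hg.2]
  rfl


lemma prodCR {a b : ℝ} {F G F' G' : ℝ → ℝ}
    (hF' : IntegrableOn F' (Set.Icc a b)) (hG' : IntegrableOn G' (Set.Icc a b))
    (hF : ∀ t ∈ Set.Icc a b, F t = F a + ∫ s in a..t, F' s)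
    (hG : ∀ t ∈ Set.Icc a b, G t = G a + ∫ s in a..t, G' s) :
    ∀ t ∈ Set.Icc a b, F t * G t = F a * G a +
      ∫ s in a..t, (F s * G' s + G s * F' s) := by
  have hmul : ContDiff ℝ 1 (fun p : ℝ × ℝ => p.1 * p.2) := contDiff_fst.mul contDiff_snd
  have hfd : ∀ p v : ℝ × ℝ, fderiv ℝ (fun p : ℝ × ℝ => p.1 * p.2) p v
      = p.1 * v.2 + p.2 * v.1 := by
    intro p v
    rw [show (fun p : ℝ × ℝ => p.1 * p.2) = (Prod.fst * Prod.snd : ℝ × ℝ → ℝ) from rfl,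
      (HasFDerivAt.mul (c := (Prod.fst : ℝ × ℝ → ℝ)) (d := Prod.snd) (x := p) hasFDerivAt_fst hasFDerivAt_snd).fderiv]
    simp
  have hγ : ∀ t ∈ Set.Icc a b, ((F t, G t) : ℝ × ℝ) = (F a, G a) +
      ∫ s in a..t, ((F' s, G' s) : ℝ × ℝ) := by
    intro t ht
    have h1 : Set.uIcc a t ⊆ Set.Icc a b := by
      rw [Set.uIcc_of_le ht.1]
      exact Set.Icc_subset_Icc le_rfl ht.2
    rw [intervalIntegral_pair ((hF'.mono_set h1).intervalIntegrable)
      ((hG'.mono_set h1).intervalIntegrable)]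
    have e1 := hF t ht
    have e2 := hG t ht
    simp only [Prod.mk_add_mk]
    rw [← e1, ← e2]
  have h2 := chainCR (ψ := fun p : ℝ × ℝ => p.1 * p.2) hmul
    (V := fun s => (F' s, G' s)) (hF'.prodMk hG') (γ := fun t => (F t, G t)) hγ
  intro t ht
  have h3 := h2 t ht
  simp only [hfd] at h3
  exact h3

noncomputable def zetaAux (t0 : ℝ) (wk : ℝ → ℝ) (z0 : ℕ → ℝ) : ℕ → ℕ → ℝ → ℝ
  | 0, _ => wk
  | (d+1), i => fun t => z0 i + ∫ s in t0..t, zetaAux t0 wk z0 d (i+1) s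

noncomputable def zeta (t0 : ℝ) (wk : ℝ → ℝ) (z0 : ℕ → ℝ) (ρ : ℕ) (i : ℕ) : ℝ → ℝ :=
  zetaAux t0 wk z0 (ρ - i) i

lemma zeta_top {t0 : ℝ} {wk : ℝ → ℝ} {z0 : ℕ → ℝ} {ρ i : ℕ} (h : ρ ≤ i) :
    zeta t0 wk z0 ρ i = wk := by
  unfold zeta
  rw [Nat.sub_eq_zero_of_le h]
  rfl

lemma zeta_lt {t0 : ℝ} {wk : ℝ → ℝ} {z0 : ℕ → ℝ} {ρ i : ℕ} (h : i < ρ) :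
    zeta t0 wk z0 ρ i = fun t => z0 i + ∫ s in t0..t, zeta t0 wk z0 ρ (i + 1) s := by
  unfold zeta
  have h1 : ρ - i = (ρ - (i+1)) + 1 := by omega
  rw [h1]
  rfl

lemma zeta_cont (t0 : ℝ) {wk : ℝ → ℝ} (hwk : Integrable wk) (z0 : ℕ → ℝ) (ρ : ℕ) :
    ∀ i, i < ρ → Continuous (zeta t0 wk z0 ρ i) := by
  have key : ∀ d i, ρ - i = d → i < ρ → Continuous (zeta t0 wk z0 ρ i) := by
    intro d
    induction d with
    | zero => intro i h hi; omega
    | succ d ih =>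
      intro i h hi
      rw [zeta_lt hi]
      apply continuous_const.add
      rcases lt_or_ge (i+1) ρ with h1 | h1
      · have hc := ih (i+1) (by omega) h1
        exact intervalIntegral.continuous_primitive (fun a b => hc.intervalIntegrable a b) t0
      · rw [zeta_top h1]
        exact hwk.continuous_primitive t0
  intro i hi; exact key (ρ - i) i rfl hi

lemma zeta_ii (t0 : ℝ) {wk : ℝ → ℝ} (hwk : Integrable wk) (z0 : ℕ → ℝ) (ρ : ℕ) :
    ∀ i, i ≤ ρ → ∀ a b : ℝ, IntervalIntegrable (zeta t0 wk z0 ρ i) volume a b := by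
  intro i hi a b
  rcases eq_or_lt_of_le hi with h | h
  · rw [h]; rw [zeta_top le_rfl]; exact hwk.intervalIntegrable
  · exact (zeta_cont t0 hwk z0 ρ i h).intervalIntegrable a b

lemma zeta_t0 {t0 : ℝ} {wk : ℝ → ℝ} {z0 : ℕ → ℝ} {ρ i : ℕ} (h : i < ρ) :
    zeta t0 wk z0 ρ i t0 = z0 i := by
  rw [zeta_lt h]; simp

lemma zeta_spec {t0 : ℝ} {wk : ℝ → ℝ} {z0 : ℕ → ℝ} {ρ i : ℕ} (h : i < ρ) (t : ℝ) :
    zeta t0 wk z0 ρ i t = zeta t0 wk z0 ρ i t0 + ∫ s in t0..t, zeta t0 wk z0 ρ (i + 1) s := by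
  rw [zeta_t0 h]
  conv_lhs => rw [zeta_lt h]

lemma zeta_iOn {t0 T : ℝ} (hT : t0 ≤ T) {wk : ℝ → ℝ} (hwk : Integrable wk) (z0 : ℕ → ℝ)
    (ρ : ℕ) : ∀ i, i ≤ ρ → IntegrableOn (zeta t0 wk z0 ρ i) (Set.Icc t0 T) := by
  intro i hi
  rcases eq_or_lt_of_le hi with h | h
  · rw [h, zeta_top le_rfl]; exact hwk.integrableOn
  · exact (zeta_cont t0 hwk z0 ρ i h).integrableOn_Icc

lemma zeta_prod {t0 T : ℝ} (hT : t0 ≤ T) {wk : ℝ → ℝ} (hwk : Integrable wk) {z0 : ℕ → ℝ}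
    {ρ : ℕ} {a b : ℕ} (ha : a < ρ) (hb : b < ρ) :
    ∀ t ∈ Set.Icc t0 T, zeta t0 wk z0 ρ a t * zeta t0 wk z0 ρ b t =
      z0 a * z0 b + ∫ s in t0..t,
        (zeta t0 wk z0 ρ a s * zeta t0 wk z0 ρ (b+1) s +
         zeta t0 wk z0 ρ b s * zeta t0 wk z0 ρ (a+1) s) := by
  have h := prodCR (a := t0) (b := T)
    (F := zeta t0 wk z0 ρ a) (G := zeta t0 wk z0 ρ b)
    (F' := zeta t0 wk z0 ρ (a+1)) (G' := zeta t0 wk z0 ρ (b+1))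
    (zeta_iOn hT hwk z0 ρ (a+1) ha) (zeta_iOn hT hwk z0 ρ (b+1) hb)
    (fun t _ => zeta_spec ha t) (fun t _ => zeta_spec hb t)
  intro t ht
  have := h t ht
  rwa [zeta_t0 ha, zeta_t0 hb] at this

lemma pascal_step (ζ : ℕ → ℝ) (i : ℕ) :
    ∑ j ∈ Finset.range (i+1), (i.choose j : ℝ) * (ζ (i-j) * ζ (j+1) + ζ j * ζ (i-j+1)) =
    ∑ j ∈ Finset.range (i+2), ((i+1).choose j : ℝ) * (ζ (i+1-j) * ζ j) := by
  have key : ∀ j ∈ Finset.range (i+1),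
      (i.choose j : ℝ) * (ζ (i-j) * ζ (j+1) + ζ j * ζ (i-j+1)) =
      (i.choose j : ℝ) * (ζ (i+1-(j+1)) * ζ (j+1)) + (i.choose j : ℝ) * (ζ (i+1-j) * ζ j) := by
    intro j hj
    have hji : j ≤ i := by
      have := Finset.mem_range.1 hj; omega
    have h1 : i + 1 - (j+1) = i - j := by omega
    have h2 : i - j + 1 = i + 1 - j := by omega
    rw [h1, h2]; ring
  rw [Finset.sum_congr rfl key, Finset.sum_add_distrib]
  rw [Finset.sum_range_succ' (fun j => ((i+1).choose j : ℝ) * (ζ (i+1-j) * ζ j)) (i+1)]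
  have e3 : ∀ j ∈ Finset.range (i+1),
      (((i+1).choose (j+1) : ℕ) : ℝ) * (ζ (i+1-(j+1)) * ζ (j+1)) =
      (i.choose j : ℝ) * (ζ (i+1-(j+1)) * ζ (j+1)) +
      (i.choose (j+1) : ℝ) * (ζ (i+1-(j+1)) * ζ (j+1)) := by
    intro j _
    rw [Nat.choose_succ_succ]
    push_cast
    ring
  rw [Finset.sum_congr rfl e3, Finset.sum_add_distrib]
  have e4 : ∑ j ∈ Finset.range (i+1), (i.choose (j+1) : ℝ) * (ζ (i+1-(j+1)) * ζ (j+1)) =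
      ∑ j ∈ Finset.range i, (i.choose (j+1) : ℝ) * (ζ (i+1-(j+1)) * ζ (j+1)) := by
    rw [Finset.sum_range_succ]
    rw [Nat.choose_eq_zero_of_lt (by omega)]
    simp
  have e5 : ∑ j ∈ Finset.range (i+1), (i.choose j : ℝ) * (ζ (i+1-j) * ζ j) =
      (∑ j ∈ Finset.range i, (i.choose (j+1) : ℝ) * (ζ (i+1-(j+1)) * ζ (j+1))) +
      (i.choose 0 : ℝ) * (ζ (i+1-0) * ζ 0) := by
    rw [Finset.sum_range_succ' (fun j => (i.choose j : ℝ) * (ζ (i+1-j) * ζ j)) i]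
  rw [e4, e5]
  simp only [Nat.choose_zero_right, Nat.cast_one]
  ring

lemma zeta_mul_iOn {t0 T : ℝ} (hT : t0 ≤ T) {wk : ℝ → ℝ} (hwk : Integrable wk) (z0 : ℕ → ℝ)
    (ρ : ℕ) {a b : ℕ} (ha : a ≤ ρ) (hb : b < ρ) :
    IntegrableOn (fun s => zeta t0 wk z0 ρ a s * zeta t0 wk z0 ρ b s) (Set.Icc t0 T) := by
  rcases eq_or_lt_of_le ha with h | h
  · rw [h, zeta_top le_rfl]
    exact hwk.integrableOn.mul_continuousOn
      ((zeta_cont t0 hwk z0 ρ b hb).continuousOn) isCompact_Icc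
  · exact (((zeta_cont t0 hwk z0 ρ a h).mul (zeta_cont t0 hwk z0 ρ b hb))).integrableOn_Icc

lemma zeta_Q_step {t0 T : ℝ} (hT : t0 ≤ T) {wk : ℝ → ℝ} (hwk : Integrable wk) {z0 : ℕ → ℝ}
    {ρ i : ℕ} (hi : i < ρ) :
    ∀ t ∈ Set.Icc t0 T,
      (∑ j ∈ Finset.range (i+1), (i.choose j : ℝ) * (zeta t0 wk z0 ρ (i-j) t * zeta t0 wk z0 ρ j t)) =
      (∑ j ∈ Finset.range (i+1), (i.choose j : ℝ) * (z0 (i-j) * z0 j)) +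
      ∫ s in t0..t, (∑ j ∈ Finset.range (i+2),
        ((i+1).choose j : ℝ) * (zeta t0 wk z0 ρ (i+1-j) s * zeta t0 wk z0 ρ j s)) := by
  intro t ht
  have huIcc : Set.uIcc t0 t ⊆ Set.Icc t0 T := by
    rw [Set.uIcc_of_le ht.1]
    exact Set.Icc_subset_Icc le_rfl ht.2
  -- term-by-term product rule
  have hterm : ∀ j ∈ Finset.range (i+1),
      (i.choose j : ℝ) * (zeta t0 wk z0 ρ (i-j) t * zeta t0 wk z0 ρ j t) =
      (i.choose j : ℝ) * (z0 (i-j) * z0 j) +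
      ∫ s in t0..t, (i.choose j : ℝ) *
        (zeta t0 wk z0 ρ (i-j) s * zeta t0 wk z0 ρ (j+1) s +
         zeta t0 wk z0 ρ j s * zeta t0 wk z0 ρ (i-j+1) s) := by
    intro j hj
    have hji : j ≤ i := by have := Finset.mem_range.1 hj; omega
    have h1 : i - j < ρ := by omega
    have h2 : j < ρ := by omega
    rw [intervalIntegral.integral_const_mul]
    rw [zeta_prod hT hwk h1 h2 t ht]
    ring
  rw [Finset.sum_congr rfl hterm, Finset.sum_add_distrib]
  congr 1
  -- exchange sum and integral
  have hii : ∀ j ∈ Finset.range (i+1), IntervalIntegrable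
      (fun s => (i.choose j : ℝ) *
        (zeta t0 wk z0 ρ (i-j) s * zeta t0 wk z0 ρ (j+1) s +
         zeta t0 wk z0 ρ j s * zeta t0 wk z0 ρ (i-j+1) s)) volume t0 t := by
    intro j hj
    have hji : j ≤ i := by have := Finset.mem_range.1 hj; omega
    apply IntervalIntegrable.const_mul
    apply IntervalIntegrable.add
    · have h := ((zeta_mul_iOn hT hwk z0 ρ (by omega : j+1 ≤ ρ) (by omega : i-j < ρ)).mono_set
        huIcc).intervalIntegrable
      simpa [mul_comm] using h
    · have h := ((zeta_mul_iOn hT hwk z0 ρ (by omega : i-j+1 ≤ ρ) (by omega : j < ρ)).mono_set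
        huIcc).intervalIntegrable
      simpa [mul_comm] using h
  rw [← intervalIntegral.integral_finset_sum hii]
  apply intervalIntegral.integral_congr
  intro s _
  exact pascal_step (fun u => zeta t0 wk z0 ρ u s) i

lemma contDiff_lieF {n : ℕ} {f : ℝ × (Fin n → ℝ) → Fin n → ℝ} {ψ : ℝ × (Fin n → ℝ) → ℝ}
    (hf : ContDiff ℝ (⊤ : ℕ∞) f) (hψ : ContDiff ℝ (⊤ : ℕ∞) ψ) :
    ContDiff ℝ (⊤ : ℕ∞) (lieF f ψ) :=
  (hψ.fderiv_right (by exact_mod_cast le_rfl)).clm_apply (contDiff_const.prodMk hf)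

lemma contDiff_lieFIter {n : ℕ} {f : ℝ × (Fin n → ℝ) → Fin n → ℝ} {ψ : ℝ × (Fin n → ℝ) → ℝ}
    (hf : ContDiff ℝ (⊤ : ℕ∞) f) (hψ : ContDiff ℝ (⊤ : ℕ∞) ψ) (j : ℕ) :
    ContDiff ℝ (⊤ : ℕ∞) (lieFIter f ψ j) := by
  induction j with
  | zero => exact hψ
  | succ j ih =>
    rw [lieFIter, Function.iterate_succ_apply']
    exact contDiff_lieF hf ih

lemma fderiv_dir {n m : ℕ} (f : ℝ × (Fin n → ℝ) → Fin n → ℝ)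
    (g : ℝ × (Fin n → ℝ) → Fin n → Fin m → ℝ) (ψ : ℝ × (Fin n → ℝ) → ℝ)
    (p : ℝ × (Fin n → ℝ)) (c : Fin m → ℝ) :
    fderiv ℝ ψ p ((1 : ℝ), fun a => f p a + ∑ i, g p a i * c i) =
      lieF f ψ p + ∑ i, c i * lieG g ψ p i := by
  have h2 : (∑ i : Fin m, c i • (((0:ℝ), fun a => g p a i) : ℝ × (Fin n → ℝ)))
      = (((0:ℝ), fun a => ∑ i, g p a i * c i) : ℝ × (Fin n → ℝ)) := by
    apply Prod.ext
    · rw [Prod.fst_sum]; simp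
    · rw [Prod.snd_sum]
      funext a
      rw [Finset.sum_apply]
      apply Finset.sum_congr rfl
      intro i _
      simp [mul_comm]
  have hsplit : (((1 : ℝ), fun a => f p a + ∑ i, g p a i * c i) : ℝ × (Fin n → ℝ)) =
      ((1 : ℝ), f p) + ∑ i : Fin m, c i • (((0:ℝ), fun a => g p a i) : ℝ × (Fin n → ℝ)) := by
    rw [h2]
    apply Prod.ext
    · simp
    · rfl
  rw [hsplit, map_add, map_sum]
  congr 1
  apply Finset.sum_congr rfl
  intro i _
  rw [(fderiv ℝ ψ p).map_smul]
  rfl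

end AuxLemmas

/-- **Theorem 1 of the paper.** For any Lebesgue-integrable virtual input `w`, the controller
`u = -Ω_g⁻¹(Ω_f + D(z)·w)` applied to `ẋ = f + g·u` keeps the state inside the constraint
set `φ(t,x(t)) ≤ 0` on `[t0,T]`. -/
theorem augmentation_implies_constraint_satisfaction
    {n m : ℕ} (f : ℝ × (Fin n → ℝ) → Fin n → ℝ)
    (g : ℝ × (Fin n → ℝ) → Fin n → Fin m → ℝ)
    (φ : ℝ × (Fin n → ℝ) → Fin m → ℝ)   -- `r = m`
    (hf : ContDiff ℝ (⊤ : ℕ∞) f) (hg : ContDiff ℝ (⊤ : ℕ∞) g)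
    (hφ : ContDiff ℝ (⊤ : ℕ∞) φ)
    (ρ : Fin m → ℕ) (hρ : ∀ k, 1 ≤ ρ k)
    -- relative degree of `φ` with respect to `(f,g)`
    (hrel1 : ∀ k : Fin m, ∀ i : ℕ, i + 2 ≤ ρ k →
      ∀ p : ℝ × (Fin n → ℝ), lieG g (lieFIter f (fun q => φ q k) i) p = 0)
    (hrel2 : ∀ k : Fin m, ∀ p : ℝ × (Fin n → ℝ),
      lieG g (lieFIter f (fun q => φ q k) (ρ k - 1)) p ≠ 0)
    -- `Ω_g(t,x)`, whose `k`-th row is `L_g L_f^{ρ_k - 1} φ_k(t,x)`, is invertible everywhere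
    (hΩ : ∀ p : ℝ × (Fin n → ℝ), IsUnit
      ((Matrix.of fun k i => lieG g (lieFIter f (fun q => φ q k) (ρ k - 1)) p i) :
        Matrix (Fin m) (Fin m) ℝ))
    (t0 T : ℝ) (hT : t0 < T) (x0 : Fin n → ℝ)
    -- initial values `z0 k i = z_k^{(i)}(t0)`
    (z0 : Fin m → ℕ → ℝ)
    (hz00 : ∀ k, φ (t0, x0) k + z0 k 0 ^ 2 / 2 = 0)
    (hz0i : ∀ k, ∀ i : ℕ, 1 ≤ i → i ≤ ρ k - 1 →
      lieFIter f (fun q => φ q k) i (t0, x0) + z0 k 0 * z0 k i +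
        (1 / 2) * ∑ j ∈ Finset.Ico 1 i, (i.choose j : ℝ) * z0 k (i - j) * z0 k j = 0)
    -- an arbitrary integrable virtual input `w`
    (w : ℝ → Fin m → ℝ) (hw : IntegrableOn w (Set.Icc t0 T))
    -- `Z k i = z_k^{(i)}`, defined by repeated integration of `w`
    (Z : Fin m → ℕ → ℝ → ℝ)
    (hZtop : ∀ k, ∀ t ∈ Set.Icc t0 T,
      Z k (ρ k - 1) t = z0 k (ρ k - 1) + ∫ s in t0..t, w s k)
    (hZstep : ∀ k, ∀ i : ℕ, 1 ≤ i → i ≤ ρ k - 1 → ∀ t ∈ Set.Icc t0 T,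
      Z k (i - 1) t = z0 k (i - 1) + ∫ s in t0..t, Z k i s)
    (x : ℝ → Fin n → ℝ) (hxc : ContinuousOn x (Set.Icc t0 T))
    -- the controller `u(s) = -Ω_g(s,x(s))⁻¹ ( Ω_f(s) + D(z(s))·w(s) )`
    (u : ℝ → Fin m → ℝ)
    (hu : ∀ s ∈ Set.Icc t0 T, u s =
      -(((Matrix.of fun k i =>
            lieG g (lieFIter f (fun q => φ q k) (ρ k - 1)) (s, x s) i) :
          Matrix (Fin m) (Fin m) ℝ)⁻¹).mulVec
        (fun k => (lieFIter f (fun q => φ q k) (ρ k) (s, x s) +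
            (1 / 2) * ∑ j ∈ Finset.Ico 1 (ρ k), ((ρ k).choose j : ℝ) *
              Z k (ρ k - j) s * Z k j s) + Z k 0 s * w s k))
    (huint : IntegrableOn u (Set.Icc t0 T))
    -- `x` solves the integral equation of the closed loop
    (hx : ∀ t ∈ Set.Icc t0 T, x t = x0 + ∫ s in t0..t,
      (fun a => f (s, x s) a + ∑ i, g (s, x s) a i * u s i)) :
    ∀ t ∈ Set.Icc t0 T, ∀ k, φ (t, x t) k ≤ 0 := by
  have hT' : t0 ≤ T := hT.le
  have ht0 : t0 ∈ Set.Icc t0 T := ⟨le_rfl, hT'⟩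
  have hxt0 : x t0 = x0 := by
    have := hx t0 ht0
    simpa using this
  intro t ht k
  have hρ1 : 1 ≤ ρ k := hρ k
  have hφk : ContDiff ℝ (⊤ : ℕ∞) (fun q => φ q k) := contDiff_pi.mp hφ k
  have hψIc : ∀ i, ContDiff ℝ (⊤ : ℕ∞) (lieFIter f (fun q => φ q k) i) :=
    fun i => contDiff_lieFIter hf hφk i
  have hψsucc : ∀ i, lieFIter f (fun q => φ q k) (i+1) = lieF f (lieFIter f (fun q => φ q k) i) :=
    fun i => by simp only [lieFIter, Function.iterate_succ_apply']
  -- the k-th component of w, cut off outside [t0, T]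
  have hwk0 : IntegrableOn (fun s => w s k) (Set.Icc t0 T) :=
    (ContinuousLinearMap.proj k : (Fin m → ℝ) →L[ℝ] ℝ).integrable_comp hw
  set wk : ℝ → ℝ := Set.indicator (Set.Icc t0 T) (fun s => w s k) with hwkdef
  have hwk : Integrable wk := (integrable_indicator_iff measurableSet_Icc).2 hwk0
  have hwkmem : ∀ s ∈ Set.Icc t0 T, wk s = w s k :=
    fun s hs => Set.indicator_of_mem hs _
  -- ζ agrees with Z on [t0, T]
  have hZζ : ∀ i, i ≤ ρ k - 1 → ∀ s ∈ Set.Icc t0 T, zeta t0 wk (z0 k) (ρ k) i s = Z k i s := by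
    have key : ∀ d, d ≤ ρ k - 1 → ∀ s ∈ Set.Icc t0 T,
        zeta t0 wk (z0 k) (ρ k) (ρ k - 1 - d) s = Z k (ρ k - 1 - d) s := by
      intro d
      induction d with
      | zero =>
        intro _ s hs
        simp only [Nat.sub_zero]
        have h2 : ρ k - 1 < ρ k := by omega
        rw [zeta_spec h2, zeta_t0 h2]
        have h3 : ρ k - 1 + 1 = ρ k := by omega
        rw [h3, zeta_top le_rfl, hZtop k s hs]
        congr 1
        apply integral_congr_Icc hs
        intro τ hτ
        exact Set.indicator_of_mem hτ _
      | succ d ih =>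
        intro hd s hs
        have hi2 : ρ k - 1 - (d+1) < ρ k := by omega
        have hi3 : (ρ k - 1 - (d+1)) + 1 = ρ k - 1 - d := by omega
        rw [zeta_spec hi2, zeta_t0 hi2]
        have hstep := hZstep k ((ρ k - 1 - (d+1))+1) (by omega) (by omega) s hs
        have h4 : (ρ k - 1 - (d+1)) + 1 - 1 = ρ k - 1 - (d+1) := by omega
        rw [h4] at hstep
        rw [hstep]
        congr 1
        apply integral_congr_Icc hs
        intro τ hτ
        have := ih (by omega) τ hτ
        rw [← hi3] at this
        exact this
    intro i hi s hs
    have := key (ρ k - 1 - i) (by omega) s hs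
    have h5 : ρ k - 1 - (ρ k - 1 - i) = i := by omega
    rwa [h5] at this
  -- integrability of the closed-loop vector field along the solution
  have hpc : ContinuousOn (fun s => ((s, x s) : ℝ × (Fin n → ℝ))) (Set.Icc t0 T) :=
    (continuous_id.continuousOn).prodMk hxc
  have hui : ∀ i : Fin m, IntegrableOn (fun s => u s i) (Set.Icc t0 T) :=
    fun i => (ContinuousLinearMap.proj i : (Fin m → ℝ) →L[ℝ] ℝ).integrable_comp huint
  have hvI : IntegrableOn (fun s => (fun a => f (s, x s) a + ∑ i, g (s, x s) a i * u s i))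
      (Set.Icc t0 T) := by
    have h1 : IntegrableOn (fun s => f (s, x s)) (Set.Icc t0 T) :=
      (hf.continuous.comp_continuousOn hpc).integrableOn_compact isCompact_Icc
    have hterm : ∀ i : Fin m, IntegrableOn
        (fun s => u s i • (fun a => g (s, x s) a i)) (Set.Icc t0 T) := by
      intro i
      have hg2 : Continuous (fun p : ℝ × (Fin n → ℝ) => (fun a => g p a i)) := by
        apply continuous_pi
        intro a
        exact (continuous_apply i).comp ((continuous_apply a).comp hg.continuous)
      have hGc : ContinuousOn (fun s => (fun a => g (s, x s) a i)) (Set.Icc t0 T) :=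
        hg2.comp_continuousOn hpc
      obtain ⟨C, hC⟩ := (isCompact_Icc (a := t0) (b := T)).exists_bound_of_continuousOn hGc
      apply Integrable.mono' ((huint.norm.const_mul (max C 0)))
      · exact ((hui i).aestronglyMeasurable).smul (hGc.aestronglyMeasurable measurableSet_Icc)
      · apply (ae_restrict_iff' measurableSet_Icc).2
        apply Filter.Eventually.of_forall
        intro s hs
        rw [norm_smul]
        calc ‖u s i‖ * ‖(fun a => g (s, x s) a i)‖
            ≤ ‖u s i‖ * max C 0 := by
              apply mul_le_mul_of_nonneg_left ((hC s hs).trans (le_max_left _ _)) (norm_nonneg _)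
          _ ≤ ‖u s‖ * max C 0 := by
              apply mul_le_mul_of_nonneg_right (norm_le_pi_norm (u s) i) (le_max_right _ _)
          _ = max C 0 * ‖u s‖ := by ring
    have h2 : IntegrableOn (fun s => ∑ i : Fin m, u s i • (fun a => g (s, x s) a i))
        (Set.Icc t0 T) := integrable_finset_sum _ (fun i _ => hterm i)
    have h3 := h1.add h2
    apply h3.congr
    apply (ae_restrict_iff' measurableSet_Icc).2
    apply Filter.Eventually.of_forall
    intro s _
    funext a
    simp only [Pi.add_apply, Finset.sum_apply, Pi.smul_apply, smul_eq_mul]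
    congr 1
    apply Finset.sum_congr rfl
    intro i _
    ring
  -- Lie derivative transport along the trajectory
  have hP : ∀ i, ∀ τ ∈ Set.Icc t0 T, lieFIter f (fun q => φ q k) i (τ, x τ) =
      lieFIter f (fun q => φ q k) i (t0, x0) +
      ∫ s in t0..τ, (lieFIter f (fun q => φ q k) (i+1) (s, x s) +
        ∑ l, u s l * lieG g (lieFIter f (fun q => φ q k) i) (s, x s) l) := by
    intro i
    have hψ1 : ContDiff ℝ 1 (lieFIter f (fun q => φ q k) i) := (hψIc i).of_le (by exact_mod_cast le_top)
    have hone : IntegrableOn (fun _ : ℝ => (1:ℝ)) (Set.Icc t0 T) := integrableOn_const measure_Icc_lt_top.ne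
    have hVI : IntegrableOn (fun s => (((1:ℝ),
        fun a => f (s, x s) a + ∑ i, g (s, x s) a i * u s i) : ℝ × (Fin n → ℝ)))
        (Set.Icc t0 T) := hone.prodMk hvI
    have hγid : ∀ τ ∈ Set.Icc t0 T, ((τ, x τ) : ℝ × (Fin n → ℝ)) = (t0, x t0) +
        ∫ s in t0..τ, (((1:ℝ),
          fun a => f (s, x s) a + ∑ i, g (s, x s) a i * u s i) : ℝ × (Fin n → ℝ)) := by
      intro τ hτ
      have huIcc : Set.uIcc t0 τ ⊆ Set.Icc t0 T := by
        rw [Set.uIcc_of_le hτ.1]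
        exact Set.Icc_subset_Icc le_rfl hτ.2
      rw [intervalIntegral_pair (intervalIntegrable_const)
        ((hvI.mono_set huIcc).intervalIntegrable)]
      rw [Prod.mk_add_mk]
      have hfst : t0 + ∫ s in t0..τ, (1:ℝ) = τ := by
        simp
      have hsnd : x t0 + (∫ s in t0..τ,
          (fun a => f (s, x s) a + ∑ i, g (s, x s) a i * u s i)) = x τ := by
        rw [hxt0]
        exact (hx τ hτ).symm
      rw [hfst, hsnd]
    have hCR := chainCR (γ := fun τ => ((τ, x τ) : ℝ × (Fin n → ℝ))) hψ1 hVI hγid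
    intro τ hτ
    have h6 := hCR τ hτ
    rw [h6, hxt0]
    congr 1
    apply integral_congr_Icc hτ
    intro s _
    rw [hψsucc i]
    exact fderiv_dir f g (lieFIter f (fun q => φ q k) i) (s, x s) (u s)
  -- the control law makes the top row explicit
  have hrow : ∀ s ∈ Set.Icc t0 T,
      (∑ l, u s l * lieG g (lieFIter f (fun q => φ q k) (ρ k - 1)) (s, x s) l) =
      -((lieFIter f (fun q => φ q k) (ρ k) (s, x s) +
          (1/2) * ∑ j ∈ Finset.Ico 1 (ρ k), ((ρ k).choose j : ℝ) *
            Z k (ρ k - j) s * Z k j s) + Z k 0 s * w s k) := by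
    intro s hs
    set A : Matrix (Fin m) (Fin m) ℝ := Matrix.of fun k' i =>
      lieG g (lieFIter f (fun q => φ q k') (ρ k' - 1)) (s, x s) i with hA
    have hAu : IsUnit A := hΩ (s, x s)
    set b : Fin m → ℝ := fun k' => (lieFIter f (fun q => φ q k') (ρ k') (s, x s) +
        (1/2) * ∑ j ∈ Finset.Ico 1 (ρ k'), ((ρ k').choose j : ℝ) *
          Z k' (ρ k' - j) s * Z k' j s) + Z k' 0 s * w s k' with hb
    have hus : u s = -(A⁻¹.mulVec b) := hu s hs
    have hAA : A.mulVec (u s) = -b := by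
      rw [hus, Matrix.mulVec_neg, Matrix.mulVec_mulVec, Matrix.mul_nonsing_inv A
        ((Matrix.isUnit_iff_isUnit_det A).1 hAu), Matrix.one_mulVec]
    have hcomp := congrFun hAA k
    simp only [Matrix.mulVec, dotProduct, Pi.neg_apply] at hcomp
    have hAk : ∀ l, A k l = lieG g (lieFIter f (fun q => φ q k) (ρ k - 1)) (s, x s) l :=
      fun l => rfl
    calc (∑ l, u s l * lieG g (lieFIter f (fun q => φ q k) (ρ k - 1)) (s, x s) l)
        = ∑ l, A k l * u s l := by
          apply Finset.sum_congr rfl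
          intro l _
          rw [hAk l]
          ring
      _ = -b k := hcomp
      _ = -((lieFIter f (fun q => φ q k) (ρ k) (s, x s) +
          (1/2) * ∑ j ∈ Finset.Ico 1 (ρ k), ((ρ k).choose j : ℝ) *
            Z k (ρ k - j) s * Z k j s) + Z k 0 s * w s k) := rfl
  -- Q-side step from the product rule and Pascal's identity
  have hQstep : ∀ i, i < ρ k → ∀ τ ∈ Set.Icc t0 T,
      (∑ j ∈ Finset.range (i+1), ((i.choose j : ℕ) : ℝ) * (zeta t0 wk (z0 k) (ρ k) (i-j) τ * zeta t0 wk (z0 k) (ρ k) j τ)) =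
      (∑ j ∈ Finset.range (i+1), ((i.choose j : ℕ) : ℝ) * (z0 k (i-j) * z0 k j)) +
      ∫ s in t0..τ, (∑ j ∈ Finset.range (i+2),
        (((i+1).choose j : ℕ) : ℝ) * (zeta t0 wk (z0 k) (ρ k) (i+1-j) s * zeta t0 wk (z0 k) (ρ k) j s)) :=
    fun i hi => zeta_Q_step hT' hwk hi
  -- splitting of the level-ρ sum
  have hQρsplit : ∀ s : ℝ,
      (∑ j ∈ Finset.range (ρ k + 1), (((ρ k).choose j : ℕ) : ℝ) * (zeta t0 wk (z0 k) (ρ k) (ρ k - j) s * zeta t0 wk (z0 k) (ρ k) j s)) =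
      2 * (zeta t0 wk (z0 k) (ρ k) 0 s * wk s) +
        ∑ j ∈ Finset.Ico 1 (ρ k), (((ρ k).choose j : ℕ) : ℝ) * (zeta t0 wk (z0 k) (ρ k) (ρ k - j) s * zeta t0 wk (z0 k) (ρ k) j s) := by
    intro s
    have hζρ : zeta t0 wk (z0 k) (ρ k) (ρ k) = wk := zeta_top le_rfl
    rw [Finset.sum_range_succ]
    rw [Finset.range_eq_Ico, Finset.sum_eq_sum_Ico_succ_bot (by omega : 0 < ρ k)]
    rw [Nat.sub_self, Nat.sub_zero, hζρ]
    simp only [Nat.choose_zero_right, Nat.choose_self, Nat.cast_one]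
    ring
  -- the control law cancels the top Lie derivative
  have hintegrand : ∀ s ∈ Set.Icc t0 T,
      (lieFIter f (fun q => φ q k) (ρ k - 1 + 1) (s, x s) +
        ∑ l, u s l * lieG g (lieFIter f (fun q => φ q k) (ρ k - 1)) (s, x s) l) =
      -((1/2) * ∑ j ∈ Finset.range (ρ k + 1),
        (((ρ k).choose j : ℕ) : ℝ) * (zeta t0 wk (z0 k) (ρ k) (ρ k - j) s * zeta t0 wk (z0 k) (ρ k) j s)) := by
    intro s hs
    have hidx : ρ k - 1 + 1 = ρ k := by omega
    rw [hidx, hrow s hs, hQρsplit s]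
    have e0 : Z k 0 s = zeta t0 wk (z0 k) (ρ k) 0 s := (hZζ 0 (by omega) s hs).symm
    have ew : w s k = wk s := (hwkmem s hs).symm
    have eIco : ∑ j ∈ Finset.Ico 1 (ρ k), (((ρ k).choose j : ℕ) : ℝ) *
        Z k (ρ k - j) s * Z k j s =
        ∑ j ∈ Finset.Ico 1 (ρ k), (((ρ k).choose j : ℕ) : ℝ) *
        (zeta t0 wk (z0 k) (ρ k) (ρ k - j) s * zeta t0 wk (z0 k) (ρ k) j s) := by
      apply Finset.sum_congr rfl
      intro j hj
      have hj' := Finset.mem_Ico.1 hj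
      rw [← hZζ (ρ k - j) (by omega) s hs, ← hZζ j (by omega) s hs]
      ring
    rw [eIco, e0, ew]
    ring
  -- value of the combined function at the initial time
  have hG0 : ∀ i, i ≤ ρ k - 1 → lieFIter f (fun q => φ q k) i (t0, x0) +
      (1/2) * (∑ j ∈ Finset.range (i+1), ((i.choose j : ℕ) : ℝ) * (z0 k (i-j) * z0 k j)) = 0 := by
    intro i hi
    rcases Nat.eq_zero_or_pos i with h0 | h1
    · subst h0
      have e1 : lieFIter f (fun q => φ q k) 0 (t0, x0) = φ (t0, x0) k := rfl
      rw [e1]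
      simp only [zero_add, Finset.sum_range_one, Nat.choose_self, Nat.cast_one,
        Nat.sub_zero, one_mul]
      have := hz00 k
      nlinarith [this]
    · have e := hz0i k i h1 (by omega)
      have esum : (∑ j ∈ Finset.range (i+1), ((i.choose j : ℕ) : ℝ) * (z0 k (i-j) * z0 k j)) =
          z0 k i * z0 k 0 +
          (∑ j ∈ Finset.Ico 1 i, ((i.choose j : ℕ) : ℝ) * z0 k (i-j) * z0 k j) +
          z0 k 0 * z0 k i := by
        rw [Finset.sum_range_succ]
        rw [Finset.range_eq_Ico, Finset.sum_eq_sum_Ico_succ_bot (by omega : 0 < i)]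
        rw [Nat.sub_self, Nat.sub_zero]
        simp only [Nat.choose_zero_right, Nat.choose_self, Nat.cast_one, one_mul]
        rw [Finset.sum_congr rfl (fun j _ => by ring :
          ∀ j ∈ Finset.Ico 1 i, ((i.choose j : ℕ) : ℝ) * (z0 k (i-j) * z0 k j) =
            ((i.choose j : ℕ) : ℝ) * z0 k (i-j) * z0 k j)]
      rw [esum]
      nlinarith [e]
  -- the inductive step identity
  have hGstep : ∀ i, i + 2 ≤ ρ k → ∀ τ ∈ Set.Icc t0 T,
      (lieFIter f (fun q => φ q k) i (τ, x τ) + (1/2) * (∑ j ∈ Finset.range (i+1),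
          ((i.choose j : ℕ) : ℝ) * (zeta t0 wk (z0 k) (ρ k) (i-j) τ * zeta t0 wk (z0 k) (ρ k) j τ))) =
      (lieFIter f (fun q => φ q k) i (t0, x0) + (1/2) * (∑ j ∈ Finset.range (i+1),
          ((i.choose j : ℕ) : ℝ) * (z0 k (i-j) * z0 k j))) +
      ∫ s in t0..τ, (lieFIter f (fun q => φ q k) (i+1) (s, x s) + (1/2) * (∑ j ∈ Finset.range (i+2),
          (((i+1).choose j : ℕ) : ℝ) * (zeta t0 wk (z0 k) (ρ k) (i+1-j) s * zeta t0 wk (z0 k) (ρ k) j s))) := by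
    intro i hi τ hτ
    have huIcc : Set.uIcc t0 τ ⊆ Set.Icc t0 T := by
      rw [Set.uIcc_of_le hτ.1]
      exact Set.Icc_subset_Icc le_rfl hτ.2
    have h1 := hP i τ hτ
    have h1' : (∫ s in t0..τ, (lieFIter f (fun q => φ q k) (i+1) (s, x s) +
        ∑ l, u s l * lieG g (lieFIter f (fun q => φ q k) i) (s, x s) l)) =
        ∫ s in t0..τ, lieFIter f (fun q => φ q k) (i+1) (s, x s) := by
      apply intervalIntegral.integral_congr
      intro s _
      beta_reduce
      rw [hrel1 k i hi (s, x s)]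
      simp
    rw [h1'] at h1
    have h2 := hQstep i (by omega) τ hτ
    have hA_ii : IntervalIntegrable (fun s => lieFIter f (fun q => φ q k) (i+1) (s, x s)) volume t0 τ :=
      (((hψIc (i+1)).continuous.comp_continuousOn hpc).mono huIcc).intervalIntegrable
    have hB_ii : IntervalIntegrable (fun s => (1/2) * (∑ j ∈ Finset.range (i+2),
        (((i+1).choose j : ℕ) : ℝ) * (zeta t0 wk (z0 k) (ρ k) (i+1-j) s * zeta t0 wk (z0 k) (ρ k) j s))) volume t0 τ := by
      apply Continuous.intervalIntegrable
      apply continuous_const.mul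
      apply continuous_finset_sum
      intro j hj
      have hj' := Finset.mem_range.1 hj
      exact continuous_const.mul ((zeta_cont t0 hwk (z0 k) (ρ k) (i+1-j) (by omega)).mul
        (zeta_cont t0 hwk (z0 k) (ρ k) j (by omega)))
    rw [h1, h2, intervalIntegral.integral_add hA_ii hB_ii,
      intervalIntegral.integral_const_mul]
    ring
  -- constancy at the top level
  have hGtop : ∀ τ ∈ Set.Icc t0 T,
      (lieFIter f (fun q => φ q k) (ρ k - 1) (τ, x τ) + (1/2) * (∑ j ∈ Finset.range ((ρ k - 1)+1),
          (((ρ k - 1).choose j : ℕ) : ℝ) * (zeta t0 wk (z0 k) (ρ k) ((ρ k - 1)-j) τ * zeta t0 wk (z0 k) (ρ k) j τ))) =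
      (lieFIter f (fun q => φ q k) (ρ k - 1) (t0, x0) + (1/2) * (∑ j ∈ Finset.range ((ρ k - 1)+1),
          (((ρ k - 1).choose j : ℕ) : ℝ) * (z0 k ((ρ k - 1)-j) * z0 k j))) := by
    intro τ hτ
    have h1 := hP (ρ k - 1) τ hτ
    have h1' : (∫ s in t0..τ, (lieFIter f (fun q => φ q k) ((ρ k - 1)+1) (s, x s) +
        ∑ l, u s l * lieG g (lieFIter f (fun q => φ q k) (ρ k - 1)) (s, x s) l)) =
        ∫ s in t0..τ, -((1/2) * ∑ j ∈ Finset.range (ρ k + 1),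
          (((ρ k).choose j : ℕ) : ℝ) * (zeta t0 wk (z0 k) (ρ k) (ρ k - j) s * zeta t0 wk (z0 k) (ρ k) j s)) :=
      integral_congr_Icc hτ hintegrand
    rw [h1', intervalIntegral.integral_neg] at h1
    have h2 := hQstep (ρ k - 1) (by omega) τ hτ
    have hidx : ρ k - 1 + 1 = ρ k := by omega
    have hidx2 : ρ k - 1 + 2 = ρ k + 1 := by omega
    rw [hidx, hidx2] at h2
    rw [hidx, h1, h2, intervalIntegral.integral_const_mul]
    ring
  -- downward induction
  have hmain : ∀ d, d ≤ ρ k - 1 → ∀ τ ∈ Set.Icc t0 T,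
      (lieFIter f (fun q => φ q k) (ρ k - 1 - d) (τ, x τ) + (1/2) * (∑ j ∈ Finset.range ((ρ k - 1 - d)+1),
          (((ρ k - 1 - d).choose j : ℕ) : ℝ) *
            (zeta t0 wk (z0 k) (ρ k) ((ρ k - 1 - d)-j) τ * zeta t0 wk (z0 k) (ρ k) j τ))) = 0 := by
    intro d
    induction d with
    | zero =>
      intro _ τ hτ
      simp only [Nat.sub_zero]
      rw [hGtop τ hτ]
      exact hG0 (ρ k - 1) le_rfl
    | succ d ih =>
      intro hd τ hτ
      have hidx : ρ k - 1 - (d+1) + 1 = ρ k - 1 - d := by omega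
      rw [hGstep (ρ k - 1 - (d+1)) (by omega) τ hτ]
      rw [hG0 (ρ k - 1 - (d+1)) (by omega)]
      have hz : (∫ s in t0..τ, (lieFIter f (fun q => φ q k) ((ρ k - 1 - (d+1))+1) (s, x s) +
          (1/2) * (∑ j ∈ Finset.range ((ρ k - 1 - (d+1))+2),
            ((((ρ k - 1 - (d+1))+1).choose j : ℕ) : ℝ) *
              (zeta t0 wk (z0 k) (ρ k) ((ρ k - 1 - (d+1))+1-j) s * zeta t0 wk (z0 k) (ρ k) j s)))) =
          ∫ s in t0..τ, (0 : ℝ) := by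
        apply integral_congr_Icc hτ
        intro s hs
        beta_reduce
        have hidx2 : ρ k - 1 - (d+1) + 2 = (ρ k - 1 - d) + 1 := by omega
        rw [hidx, hidx2]
        exact ih (by omega) s hs
      rw [hz]
      simp
  -- conclusion
  have hfin := hmain (ρ k - 1) le_rfl t ht
  have hzz : ρ k - 1 - (ρ k - 1) = 0 := by omega
  rw [hzz] at hfin
  simp only [zero_add, Finset.sum_range_one, Nat.choose_self, Nat.cast_one,
    Nat.sub_zero, one_mul] at hfin
  have e1 : lieFIter f (fun q => φ q k) 0 (t, x t) = φ (t, x t) k := rfl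
  rw [e1] at hfin
  nlinarith [hfin, mul_self_nonneg (zeta t0 wk (z0 k) (ρ k) 0 t)]
end
end
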